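/- Let C be a triangulated category and let (L, R) be an inflation factorization system in C. Then (Cone L, Cone R) is a t-structure in C. -/

import Mathlib

open CategoryTheory CategoryTheory.Limits CategoryTheory.Pretriangulated

namespace TriangFS

variable {C : Type*} [Category C] [Preadditive C] [HasZeroObject C]
  [HasShift C ℤ] [∀ n : ℤ, (shiftFunctor C n).Additive]
  [Pretriangulated C] [IsTriangulated C]

/-- `Z` is a cone of `f : X ⟶ Y` if it fits in a distinguished triangle
`X ⟶ Y ⟶ Z ⟶ X⟦1⟧`. -/
def IsConeOf {X Y : C} (f : X ⟶ Y) (Z : C) : Prop :=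
  ∃ (g : Y ⟶ Z) (h : Z ⟶ X⟦(1 : ℤ)⟧), Triangle.mk f g h ∈ distTriang C

/-- `l ⊥ r` iff `Hom(C_l, C_r) = 0` and `Hom(C_l, C_r⟦-1⟧) = 0` for cones
`C_l` of `l` and `C_r` of `r`. -/
def ConePerp {X Y Z W : C} (l : X ⟶ Y) (r : Z ⟶ W) : Prop :=
  ∀ (Cl Cr : C), IsConeOf l Cl → IsConeOf r Cr →
    (∀ φ : Cl ⟶ Cr, φ = 0) ∧ (∀ φ : Cl ⟶ Cr⟦(-1 : ℤ)⟧, φ = 0)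

/-- `Infl U`: morphisms admitting a cone in `U`. -/
def Infl (U : Set C) : MorphismProperty C :=
  fun _ _ f => ∃ Z ∈ U, IsConeOf f Z

/-- `Cone L`: objects isomorphic to a cone of some morphism in `L`. -/
def ConeClass (L : MorphismProperty C) : Set C :=
  {Z | ∃ (X Y : C) (f : X ⟶ Y), L f ∧ IsConeOf f Z}

/-- A `t`-structure `(U, V)` in a triangulated category. -/
structure IsTStructure (U V : Set C) : Prop where
  isoClosed_left : ∀ {X Y : C}, (X ≅ Y) → X ∈ U → Y ∈ U
  isoClosed_right : ∀ {X Y : C}, (X ≅ Y) → X ∈ V → Y ∈ V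
  exists_triangle : ∀ X : C, ∃ (U' V' : C) (_ : U' ∈ U) (_ : V' ∈ V)
      (f : U' ⟶ X) (g : X ⟶ V') (h : V' ⟶ U'⟦(1 : ℤ)⟧),
      Triangle.mk f g h ∈ distTriang C
  hom_zero : ∀ {X Y : C}, X ∈ U → Y ∈ V → ∀ f : X ⟶ Y, f = 0
  shift_mem : ∀ {X : C}, X ∈ U → X⟦(1 : ℤ)⟧ ∈ U

/-- An inflation factorization system `(L, R)` in a triangulated category. -/
structure IsInflFactorizationSystem (L R : MorphismProperty C) : Prop where
  factor : ∀ {X Y : C} (f : X ⟶ Y),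
    ∃ (K : C) (l : X ⟶ K) (r : K ⟶ Y), L l ∧ R r ∧ l ≫ r = f
  left_eq : ∀ {X Y : C} (f : X ⟶ Y),
    L f ↔ ∀ {Z W : C} (g : Z ⟶ W), R g → ConePerp f g
  right_eq : ∀ {Z W : C} (g : Z ⟶ W),
    R g ↔ ∀ {X Y : C} (f : X ⟶ Y), L f → ConePerp f g

open ZeroObject

/-- Cones are stable under isomorphism. -/
lemma isConeOf_of_iso {X Y : C} {f : X ⟶ Y} {Z Z' : C} (hZ : IsConeOf f Z) (e : Z ≅ Z') :
    IsConeOf f Z' := by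
  obtain ⟨g, k, hT⟩ := hZ
  refine ⟨g ≫ e.hom, e.inv ≫ k, isomorphic_distinguished _ hT _ ?_⟩
  exact Triangle.isoMk _ _ (Iso.refl _) (Iso.refl _) e.symm (by change f ≫ 𝟙 Y = 𝟙 X ≫ f; simp) (by change (g ≫ e.hom) ≫ e.inv = 𝟙 Y ≫ g; simp) (by change (e.inv ≫ k) ≫ (shiftFunctor C 1).map (𝟙 X) = e.inv ≫ k; simp)

/-- `ConeClass` is closed under isomorphism. -/
lemma coneClass_iso_closed (L : MorphismProperty C) {Z Z' : C} (e : Z ≅ Z')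
    (hZ : Z ∈ ConeClass L) : Z' ∈ ConeClass L := by
  obtain ⟨A, B, f, hf, hc⟩ := hZ
  exact ⟨A, B, f, hf, isConeOf_of_iso hc e⟩

/-- Any object is a cone of the unique map from the zero object to it. -/
lemma isConeOf_from_zero (K : C) (l : (0 : C) ⟶ K) : IsConeOf l K := by
  have hl : l = 0 := (isZero_zero C).eq_of_src l 0
  refine ⟨𝟙 K, 0, ?_⟩
  rw [hl]
  exact contractible_distinguished₁ K

/-- If all maps `A ⟶ B⟦-1⟧` vanish, then all maps `A⟦1⟧ ⟶ B` vanish. -/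
lemma hom_zero_shift {A B : C} (h : ∀ φ : A ⟶ B⟦(-1 : ℤ)⟧, φ = 0)
    (ψ : A⟦(1 : ℤ)⟧ ⟶ B) : ψ = 0 := by
  let adj := (shiftEquiv C (1 : ℤ)).toAdjunction
  have h1 : adj.homEquiv A B ψ = 0 := h _
  have h2 : adj.homEquiv A B (0 : (shiftEquiv C (1 : ℤ)).functor.obj A ⟶ B) = 0 := by
    rw [Adjunction.homEquiv_unit]; simp
  exact (adj.homEquiv A B).injective (h1.trans h2.symm)

/-- if `(L, R)` is an inflation factorization system in a
triangulated category `C`, then `(Cone L, Cone R)` is a `t`-structure in `C`. -/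
theorem inflFactorizationSystem_cone_isTStructure
    (L R : MorphismProperty C) (h : IsInflFactorizationSystem L R) :
    IsTStructure (ConeClass L) (ConeClass R) := by
  constructor
  · exact fun e hz => coneClass_iso_closed L e hz
  · exact fun e hz => coneClass_iso_closed R e hz
  · -- existence of truncation triangles, by factoring `0 ⟶ X`
    intro X
    obtain ⟨K, l, r, hl, hr, -⟩ := h.factor (0 : (0 : C) ⟶ X)
    have hK : K ∈ ConeClass L := ⟨_, _, l, hl, isConeOf_from_zero K l⟩
    obtain ⟨V, g, k, hT⟩ := distinguished_cocone_triangle r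
    exact ⟨K, V, hK, ⟨K, X, r, hr, g, k, hT⟩, r, g, k, hT⟩
  · -- hom vanishing
    rintro X Y ⟨A, B, l, hl, hcl⟩ ⟨Z, W, r, hr, hcr⟩ f
    exact (((h.left_eq l).mp hl) r hr X Y hcl hcr).1 f
  · -- closure under shift
    rintro X ⟨A, B, l, hl, hcl⟩
    obtain ⟨K, l0, r0, hl0, hr0, -⟩ := h.factor (0 : (0 : C) ⟶ X⟦(1 : ℤ)⟧)
    have hK : IsConeOf l0 K := isConeOf_from_zero K l0
    obtain ⟨V0, g0, k0, hT⟩ := distinguished_cocone_triangle r0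
    have hV0 : IsConeOf r0 V0 := ⟨g0, k0, hT⟩
    -- the map `X⟦1⟧ ⟶ V0` in the triangle is zero
    have perp1 := ((h.left_eq l).mp hl) r0 hr0 X V0 hcl hV0
    have hg0 : g0 = 0 := hom_zero_shift perp1.2 g0
    -- the identity of `V0` factors through `K⟦1⟧`, hence is zero
    obtain ⟨ρ, hρ⟩ := Triangle.yoneda_exact₃ _ hT (𝟙 V0)
      (by change g0 ≫ 𝟙 V0 = 0; rw [hg0, zero_comp])
    have perpK := ((h.left_eq l0).mp hl0) r0 hr0 K V0 hK hV0
    have hρ0 : ρ = 0 := hom_zero_shift perpK.2 ρ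
    have hzero : IsZero V0 := by
      rw [IsZero.iff_id_eq_zero, hρ, hρ0, comp_zero]
      rfl
    -- hence `r0 : K ⟶ X⟦1⟧` is an isomorphism
    have : IsIso ((Triangle.mk r0 g0 k0).mor₁) :=
      (Triangle.isZero₃_iff_isIso₁ _ hT).1 hzero
    have hiso : IsIso r0 := this
    exact coneClass_iso_closed L (asIso r0) ⟨_, _, l0, hl0, hK⟩

end TriangFS
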